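/- With 𝕃 as in the n=2 first Stäckel representation and 𝕌₁ = [[0,1],[λ−2q₁,0]], the Lax equation d𝕃/dt₁ = [𝕌₁,𝕃] (entrywise polynomial identity in λ) is equivalent to the Hamiltonian equations q̇₁=2p₂, q̇₂=2p₁+2q₁p₂, ṗ₁=−p₂²+4q₁³−6q₁q₂−c, ṗ₂=2q₂−3q₁². -/

import Mathlib

open Matrix

/-- Lax matrix of the first Stäckel representation of the n=2 stationary KdV system. -/
noncomputable def Lax (c q1 q2 p1 p2 lam : ℝ) : Matrix (Fin 2) (Fin 2) ℝ :=
  !![-p2*lam - p1 - q1*p2, lam^2 + q1*lam + q2;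
     lam^3 - q1*lam^2 + (q1^2 - q2)*lam - p2^2 - q1^3 + 2*q1*q2 + c,
     -(-p2*lam - p1 - q1*p2)]

/-- First generating matrix 𝕌₁. -/
noncomputable def U1 (q1 lam : ℝ) : Matrix (Fin 2) (Fin 2) ℝ :=
  !![0, 1; lam - 2*q1, 0]

theorem stmt4 (c : ℝ) (q1 q2 p1 p2 : ℝ → ℝ)
    (hq1 : Differentiable ℝ q1) (hq2 : Differentiable ℝ q2)
    (hp1 : Differentiable ℝ p1) (hp2 : Differentiable ℝ p2) (t : ℝ) :
    (∀ lam : ℝ, ∀ i j : Fin 2,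
        deriv (fun s => Lax c (q1 s) (q2 s) (p1 s) (p2 s) lam i j) t
          = (U1 (q1 t) lam * Lax c (q1 t) (q2 t) (p1 t) (p2 t) lam
             - Lax c (q1 t) (q2 t) (p1 t) (p2 t) lam * U1 (q1 t) lam) i j) ↔
    (deriv q1 t = 2 * p2 t ∧
     deriv q2 t = 2 * p1 t + 2 * q1 t * p2 t ∧
     deriv p1 t = -(p2 t)^2 + 4*(q1 t)^3 - 6*(q1 t)*(q2 t) - c ∧
     deriv p2 t = 2 * q2 t - 3*(q1 t)^2) := by
  have Hq1 : HasDerivAt q1 (deriv q1 t) t := (hq1 t).hasDerivAt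
  have Hq2 : HasDerivAt q2 (deriv q2 t) t := (hq2 t).hasDerivAt
  have Hp1 : HasDerivAt p1 (deriv p1 t) t := (hp1 t).hasDerivAt
  have Hp2 : HasDerivAt p2 (deriv p2 t) t := (hp2 t).hasDerivAt
  have d00 : ∀ lam : ℝ, deriv (fun s => -p2 s * lam - p1 s - q1 s * p2 s) t
      = -deriv p2 t * lam - deriv p1 t - (deriv q1 t * p2 t + q1 t * deriv p2 t) := by
    intro lam
    exact (((Hp2.neg.mul_const lam).sub Hp1).sub (Hq1.mul Hp2)).deriv
  have d11 : ∀ lam : ℝ, deriv (fun s => -(-p2 s * lam - p1 s - q1 s * p2 s)) t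
      = -(-deriv p2 t * lam - deriv p1 t - (deriv q1 t * p2 t + q1 t * deriv p2 t)) := by
    intro lam
    exact (((Hp2.neg.mul_const lam).sub Hp1).sub (Hq1.mul Hp2)).neg.deriv
  have d01 : ∀ lam : ℝ, deriv (fun s => lam^2 + q1 s * lam + q2 s) t
      = deriv q1 t * lam + deriv q2 t := by
    intro lam
    exact (((Hq1.mul_const lam).const_add (lam^2)).add Hq2).deriv
  have d10 : ∀ lam : ℝ, deriv (fun s =>
        lam^3 - q1 s * lam^2 + ((q1 s)^2 - q2 s)*lam - (p2 s)^2 - (q1 s)^3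
          + 2*(q1 s)*(q2 s) + c) t
      = -deriv q1 t * lam^2 + (2*q1 t*deriv q1 t - deriv q2 t)*lam
        - 2*p2 t*deriv p2 t - 3*(q1 t)^2*deriv q1 t
        + 2*(deriv q1 t * q2 t + q1 t * deriv q2 t) := by
    intro lam
    have h := ((((((Hq1.mul_const (lam^2)).const_sub (lam^3)).add
        (((Hq1.pow 2).sub Hq2).mul_const lam)).sub (Hp2.pow 2)).sub (Hq1.pow 3)).add
        ((Hq1.const_mul 2).mul Hq2)).add_const c
    have h' : HasDerivAt (fun s => lam^3 - q1 s * lam^2 + ((q1 s)^2 - q2 s)*lam - (p2 s)^2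
        - (q1 s)^3 + 2*(q1 s)*(q2 s) + c) _ t := h
    rw [h'.deriv]
    norm_num
    ring
  constructor
  · intro H
    have E1 := H 0 0 1
    have E2 := H 1 0 1
    have E3 := H 0 0 0
    have E4 := H 1 0 0
    simp only [Lax, U1, Matrix.mul_apply, Fin.sum_univ_two, Matrix.sub_apply,
      Matrix.of_apply, Matrix.cons_val', Matrix.cons_val_zero, Matrix.cons_val_one,
      Matrix.head_cons, Matrix.head_fin_const, Matrix.empty_val',
      Matrix.cons_val_fin_one] at E1 E2 E3 E4
    rw [d01 0] at E1
    rw [d01 1] at E2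
    rw [d00 0] at E3
    rw [d00 1] at E4
    have hq1' : deriv q1 t = 2 * p2 t := by linarith
    have hq2' : deriv q2 t = 2 * p1 t + 2 * q1 t * p2 t := by linarith
    have hp2' : deriv p2 t = 2 * q2 t - 3*(q1 t)^2 := by linarith
    refine ⟨hq1', hq2', ?_, hp2'⟩
    linear_combination -E3 - p2 t * hq1' - q1 t * hp2'
  · rintro ⟨h1, h2, h3, h4⟩ lam i j
    fin_cases i <;> fin_cases j <;>
      simp only [Fin.mk_zero, Fin.mk_one, Fin.isValue, Lax, U1, Matrix.mul_apply,
        Fin.sum_univ_two, Matrix.sub_apply, Matrix.of_apply, Matrix.cons_val',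
        Matrix.cons_val_zero, Matrix.cons_val_one, Matrix.head_cons,
        Matrix.head_fin_const, Matrix.empty_val', Matrix.cons_val_fin_one]
    · rw [d00 lam, h1, h3, h4]; ring
    · rw [d01 lam, h1, h2]; ring
    · rw [d10 lam, h1, h2, h4]; ring
    · rw [d11 lam, h1, h3, h4]; ring
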